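/- Let M be a positive definite d×d matrix with minimal eigenvalue at least b ≥ 1, vectors x_1,...,x_b of norm at most 1, and M_j = M + Σ_{i≤j} x_i x_iᵀ (with M_0 = M). Then for every x ∈ ℝ^d and every j ∈ {1,...,b}, xᵀ M⁻¹ x ≤ (1 + 1/b)^j · xᵀ M_j⁻¹ x. -/

import Mathlib

open Matrix Finset

lemma vecMulVec_quadform {d : ℕ} (w u : Fin d → ℝ) :
    u ⬝ᵥ (Matrix.vecMulVec w w).mulVec u = (w ⬝ᵥ u) ^ 2 := by
  have h1 : (Matrix.vecMulVec w w).mulVec u = fun i => w i * (w ⬝ᵥ u) := by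
    ext i
    simp [Matrix.mulVec, dotProduct, Matrix.vecMulVec_apply, Finset.mul_sum, mul_assoc]
  rw [h1]
  show ∑ i, u i * (w i * (w ⬝ᵥ u)) = _
  have h2 : ∑ i, u i * (w i * (w ⬝ᵥ u)) = (∑ i, u i * w i) * (w ⬝ᵥ u) := by
    rw [Finset.sum_mul]
    exact Finset.sum_congr rfl fun i _ => by ring
  rw [h2, show ∑ i, u i * w i = w ⬝ᵥ u from dotProduct_comm u w]
  ring

lemma vecMulVec_posSemidef {d : ℕ} (w : Fin d → ℝ) :
    (Matrix.vecMulVec w w).PosSemidef := by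
  refine Matrix.PosSemidef.of_dotProduct_mulVec_nonneg ?_ ?_
  · ext i j
    simp [Matrix.conjTranspose, Matrix.vecMulVec_apply, mul_comm]
  · intro u
    have : star u = u := by ext i; simp
    rw [this, vecMulVec_quadform]
    exact sq_nonneg _

/-- Key lemma: inverse is antitone w.r.t. quadratic forms. -/
lemma inv_quadform_antitone {d : ℕ} {A B : Matrix (Fin d) (Fin d) ℝ}
    (hA : A.PosDef) (hB : B.PosDef)
    (h : ∀ u : Fin d → ℝ, u ⬝ᵥ B.mulVec u ≤ u ⬝ᵥ A.mulVec u) (v : Fin d → ℝ) :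
    v ⬝ᵥ A⁻¹.mulVec v ≤ v ⬝ᵥ B⁻¹.mulVec v := by
  set u : Fin d → ℝ := A⁻¹.mulVec v with hu
  set w : Fin d → ℝ := B⁻¹.mulVec v with hw
  have hAu : A.mulVec u = v := by
    rw [hu, Matrix.mulVec_mulVec, Matrix.mul_nonsing_inv _ hA.det_pos.ne'.isUnit, Matrix.one_mulVec]
  have hBw : B.mulVec w = v := by
    rw [hw, Matrix.mulVec_mulVec, Matrix.mul_nonsing_inv _ hB.det_pos.ne'.isUnit, Matrix.one_mulVec]
  have hBsymm : Bᵀ = B := by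
    have := hB.isHermitian
    simpa [Matrix.IsHermitian, Matrix.conjTranspose_eq_transpose_of_trivial] using this
  have key : (0:ℝ) ≤ (u - w) ⬝ᵥ B.mulVec (u - w) := by
    have := hB.posSemidef.dotProduct_mulVec_nonneg (u - w); rwa [star_trivial] at this
  have expand : (u - w) ⬝ᵥ B.mulVec (u - w)
      = u ⬝ᵥ B.mulVec u - u ⬝ᵥ v - v ⬝ᵥ u + w ⬝ᵥ v := by
    rw [Matrix.mulVec_sub, sub_dotProduct, dotProduct_sub,
      dotProduct_sub]
    have h1 : u ⬝ᵥ B.mulVec w = u ⬝ᵥ v := by rw [hBw]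
    have h2 : w ⬝ᵥ B.mulVec u = v ⬝ᵥ u := by
      rw [Matrix.dotProduct_mulVec, ← Matrix.mulVec_transpose, hBsymm, hBw]
    have h3 : w ⬝ᵥ B.mulVec w = w ⬝ᵥ v := by rw [hBw]
    rw [h1, h2, h3]; ring
  have hAuu : u ⬝ᵥ A.mulVec u = u ⬝ᵥ v := by rw [hAu]
  have hcomm : v ⬝ᵥ u = u ⬝ᵥ v := dotProduct_comm v u
  have hcomm2 : w ⬝ᵥ v = v ⬝ᵥ w := dotProduct_comm w v
  have hB' := h u
  have goal1 : v ⬝ᵥ A⁻¹.mulVec v = v ⬝ᵥ u := rfl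
  have goal2 : v ⬝ᵥ B⁻¹.mulVec v = v ⬝ᵥ w := rfl
  rw [goal1, goal2]
  linarith [key, expand, hAuu, hB']

theorem quadform_inv_le_pow_mul
    {d : ℕ} (b : ℕ) (hb : 1 ≤ b)
    (M : Matrix (Fin d) (Fin d) ℝ) (hM : M.PosDef)
    (heig : ∀ v : Fin d → ℝ, (b : ℝ) * ∑ i, v i ^ 2 ≤ v ⬝ᵥ M.mulVec v)
    (x : ℕ → Fin d → ℝ) (hx : ∀ i < b, ∑ k, x i k ^ 2 ≤ 1) :
    ∀ (v : Fin d → ℝ) (j : ℕ), 1 ≤ j → j ≤ b →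
      v ⬝ᵥ M⁻¹.mulVec v ≤ (1 + 1 / (b : ℝ)) ^ j *
        (v ⬝ᵥ (M + ∑ i ∈ Finset.range j, Matrix.vecMulVec (x i) (x i))⁻¹.mulVec v) := by
  have hb0 : (0:ℝ) < b := by exact_mod_cast hb
  set c : ℝ := 1 + 1 / (b : ℝ) with hc
  have hc1 : 1 < c := by rw [hc]; have : 0 < 1 / (b:ℝ) := by positivity
                         linarith
  have hc0 : 0 < c := by linarith
  set N : ℕ → Matrix (Fin d) (Fin d) ℝ :=
    fun j => M + ∑ i ∈ Finset.range j, Matrix.vecMulVec (x i) (x i) with hNdef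
  have star_id : ∀ u : Fin d → ℝ, star u = u := by intro u; ext i; simp
  have hsum : ∀ j, (∑ i ∈ Finset.range j, Matrix.vecMulVec (x i) (x i)).PosSemidef := by
    intro j
    induction j with
    | zero => simpa using (Matrix.PosSemidef.zero (n := Fin d) (R := ℝ))
    | succ j ih =>
      rw [Finset.sum_range_succ]
      exact ih.add (vecMulVec_posSemidef _)
  have hNpd : ∀ j, (N j).PosDef := fun j => hM.add_posSemidef (hsum j)
  have hNquad : ∀ j u, u ⬝ᵥ M.mulVec u ≤ u ⬝ᵥ (N j).mulVec u := by
    intro j u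
    have h0 := (hsum j).dotProduct_mulVec_nonneg u
    rw [star_id] at h0
    simp only [hNdef, Matrix.add_mulVec, dotProduct_add]
    linarith
  have hsucc : ∀ j u, u ⬝ᵥ (N (j+1)).mulVec u
      = u ⬝ᵥ (N j).mulVec u + (x j ⬝ᵥ u) ^ 2 := by
    intro j u
    simp only [hNdef, Finset.sum_range_succ, ← add_assoc, Matrix.add_mulVec,
      dotProduct_add, vecMulVec_quadform]
  have step : ∀ j, j < b → ∀ u : Fin d → ℝ,
      u ⬝ᵥ (N j)⁻¹.mulVec u ≤ c * (u ⬝ᵥ (N (j+1))⁻¹.mulVec u) := by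
    intro j hjb u
    have hBpd : (c⁻¹ • N (j+1)).PosDef := by
      refine Matrix.PosDef.of_dotProduct_mulVec_pos ?_ ?_
      · have h1 := (hNpd (j+1)).isHermitian
        rw [Matrix.IsHermitian, Matrix.conjTranspose_smul]
        rw [Matrix.IsHermitian] at h1
        rw [h1]
        norm_num
      · intro z hz
        have h2 := (hNpd (j+1)).dotProduct_mulVec_pos hz
        rw [Matrix.smul_mulVec, dotProduct_smul]
        have : 0 < c⁻¹ := by positivity
        exact smul_pos this h2
    have hq : ∀ w : Fin d → ℝ,
        w ⬝ᵥ (c⁻¹ • N (j+1)).mulVec w ≤ w ⬝ᵥ (N j).mulVec w := by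
      intro w
      have hCS : (x j ⬝ᵥ w) ^ 2 ≤ ∑ k, w k ^ 2 := by
        have h1 := Finset.sum_mul_sq_le_sq_mul_sq Finset.univ (x j) w
        have h2 := hx j hjb
        have h3 : (0:ℝ) ≤ ∑ k, w k ^ 2 := by positivity
        have h4 : (x j ⬝ᵥ w) = ∑ k, x j k * w k := rfl
        rw [h4]
        nlinarith
      have hMlow := heig w
      have hNM := hNquad j w
      have hQnn : (0:ℝ) ≤ w ⬝ᵥ (N j).mulVec w := by
        have : (0:ℝ) ≤ (b:ℝ) * ∑ k, w k ^ 2 := by positivity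
        linarith
      have hxQ : (x j ⬝ᵥ w) ^ 2 * (b:ℝ) ≤ w ⬝ᵥ (N j).mulVec w := by
        nlinarith
      rw [Matrix.smul_mulVec, dotProduct_smul, hsucc j w]
      rw [smul_eq_mul, inv_mul_le_iff₀ hc0]
      have hcb : c * (w ⬝ᵥ (N j).mulVec w)
          = w ⬝ᵥ (N j).mulVec w + (1/(b:ℝ)) * (w ⬝ᵥ (N j).mulVec w) := by
        rw [hc]; ring
      rw [hcb]
      have : (x j ⬝ᵥ w) ^ 2 ≤ (1/(b:ℝ)) * (w ⬝ᵥ (N j).mulVec w) := by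
        rw [div_mul_eq_mul_div, le_div_iff₀ hb0, one_mul, mul_comm]
        nlinarith
      linarith
    have hmain := inv_quadform_antitone (hNpd j) hBpd hq u
    have hBinv : (c⁻¹ • N (j+1))⁻¹ = c • (N (j+1))⁻¹ := by
      apply Matrix.inv_eq_right_inv
      rw [Matrix.smul_mul, Matrix.mul_smul, smul_smul,
        Matrix.mul_nonsing_inv _ (hNpd (j+1)).det_pos.ne'.isUnit]
      rw [inv_mul_cancel₀ hc0.ne']
      simp
    rw [hBinv, Matrix.smul_mulVec, dotProduct_smul, smul_eq_mul] at hmain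
    exact hmain
  have main : ∀ j, j ≤ b → ∀ v : Fin d → ℝ,
      v ⬝ᵥ M⁻¹.mulVec v ≤ c ^ j * (v ⬝ᵥ (N j)⁻¹.mulVec v) := by
    intro j
    induction j with
    | zero =>
      intro _ v
      simp [hNdef]
    | succ j ih =>
      intro hj v
      have hjb : j < b := hj
      have h1 := ih (le_of_lt hjb) v
      have h2 := step j hjb v
      have hcj : (0:ℝ) ≤ c ^ j := le_of_lt (pow_pos hc0 j)
      calc v ⬝ᵥ M⁻¹.mulVec v ≤ c ^ j * (v ⬝ᵥ (N j)⁻¹.mulVec v) := h1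
        _ ≤ c ^ j * (c * (v ⬝ᵥ (N (j+1))⁻¹.mulVec v)) := by
            exact mul_le_mul_of_nonneg_left h2 hcj
        _ = c ^ (j+1) * (v ⬝ᵥ (N (j+1))⁻¹.mulVec v) := by ring
  intro v j _ hjb
  exact main j hjb v
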